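/- Let A be a critical point of h_X on U(n) (so X* = A X A, A unitary), and let β₀ ∈ T_{A*}U(n) (i.e., Aβ₀ + β₀*A* = 0). Then the curve β(t) = exp(-XAt/2) · β₀ · exp(-AXt/2) stays in T_{A*}U(n) for all real t, i.e., Aβ(t) + β(t)*A* = 0. -/

import Mathlib

open Matrix

attribute [local instance] Matrix.linftyOpNormedRing Matrix.linftyOpNormedAlgebra

/-- If `A ∈ U(n)` is a critical point of `h_X` (so `X* = AXA`) and
`β₀ ∈ T_{A*}U(n)` (i.e. `Aβ₀ + β₀*A* = 0`), then the curve
`β(t) = exp(-XAt/2)·β₀·exp(-AXt/2)` stays in `T_{A*}U(n)` for all real `t`. -/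
theorem curve_stays_tangent {n : ℕ} (A X β₀ : Matrix (Fin n) (Fin n) ℂ)
    (hA : A * Aᴴ = 1) (hcrit : Xᴴ = A * X * A)
    (hβ : A * β₀ + β₀ᴴ * Aᴴ = 0) (t : ℝ) :
    A * (NormedSpace.exp (((-(t / 2) : ℝ) : ℂ) • (X * A)) * β₀ *
          NormedSpace.exp (((-(t / 2) : ℝ) : ℂ) • (A * X))) +
      (NormedSpace.exp (((-(t / 2) : ℝ) : ℂ) • (X * A)) * β₀ *
          NormedSpace.exp (((-(t / 2) : ℝ) : ℂ) • (A * X)))ᴴ * Aᴴ = 0 := by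
  have hAA : Aᴴ * A = 1 := mul_eq_one_comm.mp hA
  set c : ℂ := ((-(t / 2) : ℝ) : ℂ) with hc
  set E := NormedSpace.exp (c • (X * A)) with hE
  set F := NormedSpace.exp (c • (A * X)) with hF
  have hstarc : star c = c := by simp [hc]
  -- A*X is hermitian
  have hAXh : (A * X)ᴴ = A * X := by
    rw [conjTranspose_mul, hcrit]
    rw [mul_assoc, hA, mul_one]
  have hXAh : (X * A)ᴴ = X * A := by
    rw [conjTranspose_mul, hcrit]
    rw [← mul_assoc, ← mul_assoc, hAA, one_mul]
  -- F and E are hermitian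
  have hFh : Fᴴ = F := by
    rw [hF, ← Matrix.exp_conjTranspose, conjTranspose_smul, hstarc, hAXh]
  have hEh : Eᴴ = E := by
    rw [hE, ← Matrix.exp_conjTranspose, conjTranspose_smul, hstarc, hXAh]
  -- intertwining: A * E = F * A
  have U : (Matrix (Fin n) (Fin n) ℂ)ˣ := ⟨A, Aᴴ, hA, hAA⟩
  have hconj : F = A * E * Aᴴ := by
    have := Matrix.exp_units_conj (⟨A, Aᴴ, hA, hAA⟩ : (Matrix (Fin n) (Fin n) ℂ)ˣ)
      (c • (X * A))
    simp only [Units.inv_mk] at this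
    rw [hF, hE, ← this]
    congr 1
    rw [Matrix.mul_smul, Matrix.smul_mul]
    congr 1
    rw [← mul_assoc, mul_assoc (A * X) A Aᴴ, hA, mul_one]
  have hAE : A * E = F * A := by
    rw [hconj, mul_assoc, mul_assoc, hAA, mul_one]
  have hEA : E * Aᴴ = Aᴴ * F := by
    rw [hconj, ← mul_assoc, ← mul_assoc, hAA, one_mul]
  calc A * (E * β₀ * F) + (E * β₀ * F)ᴴ * Aᴴ
      = F * ((A * β₀ + β₀ᴴ * Aᴴ) * F) := by
        simp only [conjTranspose_mul, hFh, hEh]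
        rw [← mul_assoc A (E * β₀) F, ← mul_assoc A E β₀, hAE,
          mul_assoc F (β₀ᴴ * E) Aᴴ, mul_assoc β₀ᴴ E Aᴴ, hEA]
        noncomm_ring
    _ = 0 := by rw [hβ, zero_mul, mul_zero]
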